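/- Let F : ℝ² → [0,1] be a bivariate distribution function that is Lipschitz continuous with constant C, i.e. |F(x,y) − F(x′,y′)| ≤ C(|x − x′| + |y − y′|) for all points, and let (X₁,Y₁) and (X₂,Y₂) be independent random vectors each with distribution function F. Let h be the Kendall kernel. Then there exists a constant L > 0 (depending only on C) such that for every ε > 0: E[ sup { |h((x₁,y₁),(x₂,y₂)) − h((X₁,Y₁),(X₂,Y₂))| : (x₁,y₁,x₂,y₂) ∈ ℝ⁴, |(x₁,y₁,x₂,y₂) − (X₁,Y₁,X₂,Y₂)|₂ ≤ ε } ] ≤ L ε, where |·|₂ is the Euclidean norm on ℝ⁴. In other words, the Kendall kernel satisfies the variation condition with respect to F. -/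

import Mathlib

open MeasureTheory

/-- The Kendall kernel: `h((x₁,y₁),(x₂,y₂)) = sign((x₂−x₁)(y₂−y₁))`. -/
noncomputable def kendallKernel (z w : ℝ × ℝ) : ℝ :=
  if 0 < (w.1 - z.1) * (w.2 - z.2) then 1
  else if (w.1 - z.1) * (w.2 - z.2) < 0 then -1
  else 0

/-- The Euclidean norm of the difference of two points of `ℝ² × ℝ² ≅ ℝ⁴`. -/
noncomputable def euclDist4 (w z : (ℝ × ℝ) × (ℝ × ℝ)) : ℝ :=
  Real.sqrt ((w.1.1 - z.1.1) ^ 2 + (w.1.2 - z.1.2) ^ 2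
    + (w.2.1 - z.2.1) ^ 2 + (w.2.2 - z.2.2) ^ 2)

lemma kendall_abs_le_one (z w : ℝ × ℝ) : |kendallKernel z w| ≤ 1 := by
  unfold kendallKernel; split_ifs <;> norm_num

lemma kendall_diff_le_two (z w z' w' : ℝ × ℝ) :
    |kendallKernel z w - kendallKernel z' w'| ≤ 2 := by
  calc |kendallKernel z w - kendallKernel z' w'|
      ≤ |kendallKernel z w| + |kendallKernel z' w'| := abs_sub _ _
    _ ≤ 2 := by linarith [kendall_abs_le_one z w, kendall_abs_le_one z' w']

lemma same_sign {ε d d' : ℝ} (hε : 0 < ε) (hd : 2*ε < |d|) (hdd : |d' - d| ≤ 2*ε) :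
    (0 < d ↔ 0 < d') ∧ (d < 0 ↔ d' < 0) := by
  have h1 := abs_le.mp hdd
  rcases lt_trichotomy d 0 with h|h|h
  · rw [abs_of_neg h] at hd
    constructor <;> constructor <;> intro <;> linarith
  · subst h; simp at hd; linarith [abs_nonneg (0:ℝ)]
  · rw [abs_of_pos h] at hd
    constructor <;> constructor <;> intro <;> linarith

lemma kendall_eq_of_close {ε : ℝ} (hε : 0 < ε) (z w : (ℝ × ℝ) × (ℝ × ℝ))
    (hx : 2*ε < |z.2.1 - z.1.1|) (hy : 2*ε < |z.2.2 - z.1.2|)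
    (hd : Real.sqrt ((w.1.1 - z.1.1) ^ 2 + (w.1.2 - z.1.2) ^ 2
      + (w.2.1 - z.2.1) ^ 2 + (w.2.2 - z.2.2) ^ 2) ≤ ε) :
    kendallKernel w.1 w.2 = kendallKernel z.1 z.2 := by
  have key : ∀ a : ℝ, a ^ 2 ≤ (w.1.1 - z.1.1) ^ 2 + (w.1.2 - z.1.2) ^ 2
      + (w.2.1 - z.2.1) ^ 2 + (w.2.2 - z.2.2) ^ 2 → |a| ≤ ε := by
    intro a ha
    rw [← Real.sqrt_sq_eq_abs]
    exact le_trans (Real.sqrt_le_sqrt ha) hd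
  have c1 : |w.1.1 - z.1.1| ≤ ε := key _ (by nlinarith [sq_nonneg (w.1.2 - z.1.2), sq_nonneg (w.2.1 - z.2.1), sq_nonneg (w.2.2 - z.2.2)])
  have c2 : |w.1.2 - z.1.2| ≤ ε := key _ (by nlinarith [sq_nonneg (w.1.1 - z.1.1), sq_nonneg (w.2.1 - z.2.1), sq_nonneg (w.2.2 - z.2.2)])
  have c3 : |w.2.1 - z.2.1| ≤ ε := key _ (by nlinarith [sq_nonneg (w.1.1 - z.1.1), sq_nonneg (w.1.2 - z.1.2), sq_nonneg (w.2.2 - z.2.2)])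
  have c4 : |w.2.2 - z.2.2| ≤ ε := key _ (by nlinarith [sq_nonneg (w.1.1 - z.1.1), sq_nonneg (w.1.2 - z.1.2), sq_nonneg (w.2.1 - z.2.1)])
  have hx' : |(w.2.1 - w.1.1) - (z.2.1 - z.1.1)| ≤ 2*ε := by
    have := abs_le.mp c1; have := abs_le.mp c3
    rw [abs_le]; constructor <;> linarith
  have hy' : |(w.2.2 - w.1.2) - (z.2.2 - z.1.2)| ≤ 2*ε := by
    have := abs_le.mp c2; have := abs_le.mp c4
    rw [abs_le]; constructor <;> linarith
  obtain ⟨px, nx⟩ := same_sign hε hx hx'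
  obtain ⟨py, ny⟩ := same_sign hε hy hy'
  have hpos : 0 < (w.2.1 - w.1.1) * (w.2.2 - w.1.2) ↔
      0 < (z.2.1 - z.1.1) * (z.2.2 - z.1.2) := by
    rw [mul_pos_iff, mul_pos_iff, px, nx, py, ny]
  have hneg : (w.2.1 - w.1.1) * (w.2.2 - w.1.2) < 0 ↔
      (z.2.1 - z.1.1) * (z.2.2 - z.1.2) < 0 := by
    rw [mul_neg_iff, mul_neg_iff, px, nx, py, ny]
  unfold kendallKernel
  rw [if_congr hpos rfl (if_congr hneg rfl rfl)]

lemma stripX (ν : Measure (ℝ × ℝ)) [IsProbabilityMeasure ν]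
    (F : ℝ → ℝ → ℝ)
    (hF : ∀ x y : ℝ, F x y = (ν {p : ℝ × ℝ | p.1 ≤ x ∧ p.2 ≤ y}).toReal)
    (C : ℝ)
    (hLip : ∀ x y x' y' : ℝ, |F x y - F x' y'| ≤ C * (|x - x'| + |y - y'|))
    (a b : ℝ) (hab : a ≤ b) :
    ν {p : ℝ × ℝ | a < p.1 ∧ p.1 ≤ b} ≤ ENNReal.ofReal (C * (b - a)) := by
  have key : ∀ n : ℕ, ν {p : ℝ × ℝ | a < p.1 ∧ p.1 ≤ b ∧ p.2 ≤ (n : ℝ)}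
      ≤ ENNReal.ofReal (C * (b - a)) := by
    intro n
    have hsub : {p : ℝ × ℝ | a < p.1 ∧ p.1 ≤ b ∧ p.2 ≤ (n : ℝ)} ⊆
        {p : ℝ × ℝ | p.1 ≤ b ∧ p.2 ≤ (n : ℝ)} \ {p : ℝ × ℝ | p.1 ≤ a ∧ p.2 ≤ (n : ℝ)} := by
      rintro p ⟨h1, h2, h3⟩
      exact ⟨⟨h2, h3⟩, fun h => absurd h.1 (not_le.mpr h1)⟩
    refine le_trans (measure_mono hsub) ?_
    have hmsmall : MeasurableSet {p : ℝ × ℝ | p.1 ≤ a ∧ p.2 ≤ (n : ℝ)} :=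
      (measurableSet_le measurable_fst measurable_const).inter
        (measurableSet_le measurable_snd measurable_const)
    have hsub2 : {p : ℝ × ℝ | p.1 ≤ a ∧ p.2 ≤ (n : ℝ)} ⊆
        {p : ℝ × ℝ | p.1 ≤ b ∧ p.2 ≤ (n : ℝ)} := fun p hp => ⟨hp.1.trans hab, hp.2⟩
    rw [measure_diff hsub2 hmsmall.nullMeasurableSet (measure_ne_top ν _)]
    have e1 : ν {p : ℝ × ℝ | p.1 ≤ b ∧ p.2 ≤ (n : ℝ)} = ENNReal.ofReal (F b n) := by
      rw [hF]; exact (ENNReal.ofReal_toReal (measure_ne_top ν _)).symm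
    have e2 : ν {p : ℝ × ℝ | p.1 ≤ a ∧ p.2 ≤ (n : ℝ)} = ENNReal.ofReal (F a n) := by
      rw [hF]; exact (ENNReal.ofReal_toReal (measure_ne_top ν _)).symm
    have hFa : 0 ≤ F a n := by rw [hF]; exact ENNReal.toReal_nonneg
    rw [e1, e2, ← ENNReal.ofReal_sub _ hFa]
    apply ENNReal.ofReal_le_ofReal
    have h := hLip b n a n
    simp only [sub_self, abs_zero, add_zero] at h
    calc F b n - F a n ≤ |F b n - F a n| := le_abs_self _
      _ ≤ C * |b - a| := h
      _ = C * (b - a) := by rw [abs_of_nonneg (by linarith)]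
  have hU : {p : ℝ × ℝ | a < p.1 ∧ p.1 ≤ b}
      = ⋃ n : ℕ, {p : ℝ × ℝ | a < p.1 ∧ p.1 ≤ b ∧ p.2 ≤ (n : ℝ)} := by
    ext p
    simp only [Set.mem_setOf_eq, Set.mem_iUnion]
    constructor
    · rintro ⟨h1, h2⟩
      obtain ⟨n, hn⟩ := exists_nat_ge p.2
      exact ⟨n, h1, h2, hn⟩
    · rintro ⟨n, h1, h2, _⟩
      exact ⟨h1, h2⟩
  rw [hU, Directed.measure_iUnion ?_]
  · exact iSup_le key
  · refine Monotone.directed_le fun m n hmn p hp => ?_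
    exact ⟨hp.1, hp.2.1, hp.2.2.trans (by exact_mod_cast hmn)⟩

lemma stripY (ν : Measure (ℝ × ℝ)) [IsProbabilityMeasure ν]
    (F : ℝ → ℝ → ℝ)
    (hF : ∀ x y : ℝ, F x y = (ν {p : ℝ × ℝ | p.1 ≤ x ∧ p.2 ≤ y}).toReal)
    (C : ℝ)
    (hLip : ∀ x y x' y' : ℝ, |F x y - F x' y'| ≤ C * (|x - x'| + |y - y'|))
    (a b : ℝ) (hab : a ≤ b) :
    ν {p : ℝ × ℝ | a < p.2 ∧ p.2 ≤ b} ≤ ENNReal.ofReal (C * (b - a)) := by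
  have key : ∀ n : ℕ, ν {p : ℝ × ℝ | a < p.2 ∧ p.2 ≤ b ∧ p.1 ≤ (n : ℝ)}
      ≤ ENNReal.ofReal (C * (b - a)) := by
    intro n
    have hsub : {p : ℝ × ℝ | a < p.2 ∧ p.2 ≤ b ∧ p.1 ≤ (n : ℝ)} ⊆
        {p : ℝ × ℝ | p.1 ≤ (n : ℝ) ∧ p.2 ≤ b} \ {p : ℝ × ℝ | p.1 ≤ (n : ℝ) ∧ p.2 ≤ a} := by
      rintro p ⟨h1, h2, h3⟩
      exact ⟨⟨h3, h2⟩, fun h => absurd h.2 (not_le.mpr h1)⟩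
    refine le_trans (measure_mono hsub) ?_
    have hmsmall : MeasurableSet {p : ℝ × ℝ | p.1 ≤ (n : ℝ) ∧ p.2 ≤ a} :=
      (measurableSet_le measurable_fst measurable_const).inter
        (measurableSet_le measurable_snd measurable_const)
    have hsub2 : {p : ℝ × ℝ | p.1 ≤ (n : ℝ) ∧ p.2 ≤ a} ⊆
        {p : ℝ × ℝ | p.1 ≤ (n : ℝ) ∧ p.2 ≤ b} := fun p hp => ⟨hp.1, hp.2.trans hab⟩
    rw [measure_diff hsub2 hmsmall.nullMeasurableSet (measure_ne_top ν _)]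
    have e1 : ν {p : ℝ × ℝ | p.1 ≤ (n : ℝ) ∧ p.2 ≤ b} = ENNReal.ofReal (F n b) := by
      rw [hF]; exact (ENNReal.ofReal_toReal (measure_ne_top ν _)).symm
    have e2 : ν {p : ℝ × ℝ | p.1 ≤ (n : ℝ) ∧ p.2 ≤ a} = ENNReal.ofReal (F n a) := by
      rw [hF]; exact (ENNReal.ofReal_toReal (measure_ne_top ν _)).symm
    have hFa : 0 ≤ F n a := by rw [hF]; exact ENNReal.toReal_nonneg
    rw [e1, e2, ← ENNReal.ofReal_sub _ hFa]
    apply ENNReal.ofReal_le_ofReal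
    have h := hLip n b n a
    simp only [sub_self, abs_zero, zero_add] at h
    calc F n b - F n a ≤ |F n b - F n a| := le_abs_self _
      _ ≤ C * |b - a| := h
      _ = C * (b - a) := by rw [abs_of_nonneg (by linarith)]
  have hU : {p : ℝ × ℝ | a < p.2 ∧ p.2 ≤ b}
      = ⋃ n : ℕ, {p : ℝ × ℝ | a < p.2 ∧ p.2 ≤ b ∧ p.1 ≤ (n : ℝ)} := by
    ext p
    simp only [Set.mem_setOf_eq, Set.mem_iUnion]
    constructor
    · rintro ⟨h1, h2⟩
      obtain ⟨n, hn⟩ := exists_nat_ge p.1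
      exact ⟨n, h1, h2, hn⟩
    · rintro ⟨n, h1, h2, _⟩
      exact ⟨h1, h2⟩
  rw [hU, Directed.measure_iUnion ?_]
  · exact iSup_le key
  · refine Monotone.directed_le fun m n hmn p hp => ?_
    exact ⟨hp.1, hp.2.1, hp.2.2.trans (by exact_mod_cast hmn)⟩

/-- If the bivariate distribution function `F` of the law `ν` is Lipschitz
with constant `C`, then the Kendall kernel satisfies the variation condition with respect
to `ν`: there is `L > 0` (depending only on `C`) with
`E[sup_{|(x₁,y₁,x₂,y₂) − (X₁,Y₁,X₂,Y₂)|₂ ≤ ε} |h(x,y) − h(X,Y)|] ≤ Lε` for every `ε > 0`,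
where `(X₁,Y₁)` and `(X₂,Y₂)` are independent with law `ν`. -/
theorem kendall_kernel_variation_condition
    (ν : Measure (ℝ × ℝ)) [IsProbabilityMeasure ν]
    (F : ℝ → ℝ → ℝ)
    (hF : ∀ x y : ℝ, F x y = (ν {p : ℝ × ℝ | p.1 ≤ x ∧ p.2 ≤ y}).toReal)
    (C : ℝ) (hC : 0 < C)
    (hLip : ∀ x y x' y' : ℝ, |F x y - F x' y'| ≤ C * (|x - x'| + |y - y'|)) :
    ∃ L : ℝ, 0 < L ∧ ∀ ε : ℝ, 0 < ε →
      ∫ z : (ℝ × ℝ) × (ℝ × ℝ),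
          (⨆ w : {w : (ℝ × ℝ) × (ℝ × ℝ) // euclDist4 w z ≤ ε},
            |kendallKernel w.1.1 w.1.2 - kendallKernel z.1 z.2|) ∂(ν.prod ν)
        ≤ L * ε := by
  refine ⟨20 * C, by linarith, fun ε hε => ?_⟩
  set μ := ν.prod ν
  set A : Set ((ℝ × ℝ) × (ℝ × ℝ)) :=
    {z | |z.2.1 - z.1.1| ≤ 2 * ε ∨ |z.2.2 - z.1.2| ≤ 2 * ε} with hA_def
  have hA1m : MeasurableSet {z : (ℝ × ℝ) × (ℝ × ℝ) | |z.2.1 - z.1.1| ≤ 2 * ε} :=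
    measurableSet_le ((measurable_fst.comp measurable_snd).sub
      (measurable_fst.comp measurable_fst)).abs measurable_const
  have hA2m : MeasurableSet {z : (ℝ × ℝ) × (ℝ × ℝ) | |z.2.2 - z.1.2| ≤ 2 * ε} :=
    measurableSet_le ((measurable_snd.comp measurable_snd).sub
      (measurable_snd.comp measurable_fst)).abs measurable_const
  have hAm : MeasurableSet A := hA1m.union hA2m
  set f : (ℝ × ℝ) × (ℝ × ℝ) → ℝ := fun z =>
    ⨆ w : {w : (ℝ × ℝ) × (ℝ × ℝ) // euclDist4 w z ≤ ε},
      |kendallKernel w.1.1 w.1.2 - kendallKernel z.1 z.2| with hf_def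
  set g : (ℝ × ℝ) × (ℝ × ℝ) → ℝ := A.indicator (fun _ => 2) with hg_def
  have hself : ∀ z : (ℝ × ℝ) × (ℝ × ℝ), euclDist4 z z ≤ ε := by
    intro z
    unfold euclDist4
    simp only [sub_self]
    norm_num
    positivity
  have hbdd : ∀ z : (ℝ × ℝ) × (ℝ × ℝ), BddAbove (Set.range fun
      w : {w : (ℝ × ℝ) × (ℝ × ℝ) // euclDist4 w z ≤ ε} =>
      |kendallKernel w.1.1 w.1.2 - kendallKernel z.1 z.2|) := by
    intro z
    refine ⟨2, ?_⟩
    rintro x ⟨w, rfl⟩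
    exact kendall_diff_le_two _ _ _ _
  have hf_nonneg : ∀ z, 0 ≤ f z := by
    intro z
    refine le_ciSup_of_le (hbdd z) ⟨z, hself z⟩ ?_
    simp
  have hfg : ∀ z, f z ≤ g z := by
    intro z
    haveI : Nonempty {w : (ℝ × ℝ) × (ℝ × ℝ) // euclDist4 w z ≤ ε} := ⟨⟨z, hself z⟩⟩
    by_cases hz : z ∈ A
    · rw [hg_def, Set.indicator_of_mem hz]
      exact ciSup_le fun w => kendall_diff_le_two _ _ _ _
    · rw [hg_def, Set.indicator_of_notMem hz]
      refine ciSup_le fun w => ?_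
      have hz' : ¬(|z.2.1 - z.1.1| ≤ 2 * ε ∨ |z.2.2 - z.1.2| ≤ 2 * ε) := hz
      push_neg at hz'
      have := kendall_eq_of_close hε z w hz'.1 hz'.2 w.2
      rw [show kendallKernel w.1.1 w.1.2 = kendallKernel (w : (ℝ×ℝ)×(ℝ×ℝ)).1 (w : (ℝ×ℝ)×(ℝ×ℝ)).2 from rfl, this]
      simp
  have hg_int : Integrable g μ := (integrable_const (2 : ℝ)).indicator hAm
  have step1 : ∫ z, f z ∂μ ≤ ∫ z, g z ∂μ :=
    integral_mono_of_nonneg (Filter.Eventually.of_forall hf_nonneg) hg_int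
      (Filter.Eventually.of_forall hfg)
  have step2 : ∫ z, g z ∂μ = (μ A).toReal * 2 := by
    rw [hg_def, integral_indicator_const _ hAm]
    simp [mul_comm, measureReal_def]
  -- bound μ A
  have h1 : μ {z : (ℝ × ℝ) × (ℝ × ℝ) | |z.2.1 - z.1.1| ≤ 2 * ε}
      ≤ ENNReal.ofReal (C * (5 * ε)) := by
    rw [Measure.prod_apply hA1m]
    have hb : ∀ x : ℝ × ℝ, ν (Prod.mk x ⁻¹' {z : (ℝ × ℝ) × (ℝ × ℝ) | |z.2.1 - z.1.1| ≤ 2 * ε})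
        ≤ ENNReal.ofReal (C * (5 * ε)) := by
      intro x
      have hpre : Prod.mk x ⁻¹' {z : (ℝ × ℝ) × (ℝ × ℝ) | |z.2.1 - z.1.1| ≤ 2 * ε}
          ⊆ {p : ℝ × ℝ | x.1 - 3 * ε < p.1 ∧ p.1 ≤ x.1 + 2 * ε} := by
        intro p hp
        simp only [Set.mem_preimage, Set.mem_setOf_eq] at hp ⊢
        have := abs_le.mp hp
        constructor <;> linarith [this.1, this.2]
      refine le_trans (measure_mono hpre) ?_
      have := stripX ν F hF C hLip (x.1 - 3 * ε) (x.1 + 2 * ε) (by linarith)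
      convert this using 2
      · rfl
      ring
    calc ∫⁻ x, ν (Prod.mk x ⁻¹' {z : (ℝ × ℝ) × (ℝ × ℝ) | |z.2.1 - z.1.1| ≤ 2 * ε}) ∂ν
        ≤ ∫⁻ _, ENNReal.ofReal (C * (5 * ε)) ∂ν := lintegral_mono hb
      _ = ENNReal.ofReal (C * (5 * ε)) := by simp
  have h2 : μ {z : (ℝ × ℝ) × (ℝ × ℝ) | |z.2.2 - z.1.2| ≤ 2 * ε}
      ≤ ENNReal.ofReal (C * (5 * ε)) := by
    rw [Measure.prod_apply hA2m]
    have hb : ∀ x : ℝ × ℝ, ν (Prod.mk x ⁻¹' {z : (ℝ × ℝ) × (ℝ × ℝ) | |z.2.2 - z.1.2| ≤ 2 * ε})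
        ≤ ENNReal.ofReal (C * (5 * ε)) := by
      intro x
      have hpre : Prod.mk x ⁻¹' {z : (ℝ × ℝ) × (ℝ × ℝ) | |z.2.2 - z.1.2| ≤ 2 * ε}
          ⊆ {p : ℝ × ℝ | x.2 - 3 * ε < p.2 ∧ p.2 ≤ x.2 + 2 * ε} := by
        intro p hp
        simp only [Set.mem_preimage, Set.mem_setOf_eq] at hp ⊢
        have := abs_le.mp hp
        constructor <;> linarith [this.1, this.2]
      refine le_trans (measure_mono hpre) ?_
      have := stripY ν F hF C hLip (x.2 - 3 * ε) (x.2 + 2 * ε) (by linarith)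
      convert this using 2
      · rfl
      ring
    calc ∫⁻ x, ν (Prod.mk x ⁻¹' {z : (ℝ × ℝ) × (ℝ × ℝ) | |z.2.2 - z.1.2| ≤ 2 * ε}) ∂ν
        ≤ ∫⁻ _, ENNReal.ofReal (C * (5 * ε)) ∂ν := lintegral_mono hb
      _ = ENNReal.ofReal (C * (5 * ε)) := by simp
  have hAbound : μ A ≤ ENNReal.ofReal (10 * C * ε) := by
    have : μ A ≤ μ {z : (ℝ × ℝ) × (ℝ × ℝ) | |z.2.1 - z.1.1| ≤ 2 * ε}
        + μ {z : (ℝ × ℝ) × (ℝ × ℝ) | |z.2.2 - z.1.2| ≤ 2 * ε} := measure_union_le _ _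
    refine le_trans this (le_trans (add_le_add h1 h2) ?_)
    rw [← ENNReal.ofReal_add (by positivity) (by positivity)]
    apply ENNReal.ofReal_le_ofReal
    ring_nf
    linarith
  have hAreal : (μ A).toReal ≤ 10 * C * ε := by
    refine ENNReal.toReal_le_of_le_ofReal (by positivity) hAbound
  calc ∫ z, f z ∂μ ≤ (μ A).toReal * 2 := step2 ▸ step1
    _ ≤ 10 * C * ε * 2 := by linarith
    _ = 20 * C * ε := by ring
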